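/- Let β ∈ (0,1), let Ω = [0,1] with the standard metric, let μ be the probability measure on [0,1] with density proportional to |x − 1/2|^{β−1} with respect to Lebesgue measure, and let f(x) = 1[x > 1/2]. Then: (i) Λ̃_f^β(μ) < ∞ (f is weakly-average-β-Hölder with respect to μ); (ii) Λ̄_f^β(μ) = ∞ (f is not strongly-average-β-Hölder with any finite modulus); and (iii) Λ̃_f^1(μ) = ∞ (f is not weakly-average-Lipschitz with any finite modulus). -/

import Mathlib

open MeasureTheory Set Metric
open scoped ENNReal NNReal

noncomputable section

/-- The `β`-hslope of `f` at `x`: `Λ_f^β(x) = sup_{y ≠ x} |f x - f y| / ρ(x,y)^β`. -/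
def hslope {Ω : Type*} [MetricSpace Ω] (β : ℝ) (f : Ω → ℝ) (x : Ω) : ℝ≥0∞ :=
  ⨆ (y : Ω) (_ : y ≠ x), ENNReal.ofReal (|f x - f y| / dist x y ^ β)

/-- The average `β`-hslope of `f` with respect to `μ`: `E_{X∼μ}[Λ_f^β(X)]`. -/
def avgSlope {Ω : Type*} [MetricSpace Ω] [MeasurableSpace Ω] (μ : Measure Ω) (β : ℝ)
    (f : Ω → ℝ) : ℝ≥0∞ :=
  ∫⁻ x, hslope β f x ∂μ

/-- The weak average `β`-hslope of `f` with respect to `μ`: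
`sup_{t>0} t · μ {x : Λ_f^β(x) ≥ t}`. -/
def weakAvgSlope {Ω : Type*} [MetricSpace Ω] [MeasurableSpace Ω] (μ : Measure Ω) (β : ℝ)
    (f : Ω → ℝ) : ℝ≥0∞ :=
  ⨆ (t : ℝ) (_ : 0 < t), ENNReal.ofReal t * μ {x | ENNReal.ofReal t ≤ hslope β f x}

/-- The class `H̄öl^β_L(Ω,μ)` of measurable `[0,1]`-valued functions with average
`β`-hslope at most `L`. -/
def avgHolderClass {Ω : Type*} [MetricSpace Ω] [MeasurableSpace Ω] (μ : Measure Ω)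
    (β L : ℝ) : Set (Ω → ℝ) :=
  {f | Measurable f ∧ (∀ x, f x ∈ Icc (0:ℝ) 1) ∧ avgSlope μ β f ≤ ENNReal.ofReal L}

/-- The class `H̃öl^β_L(Ω,μ)` of measurable `[0,1]`-valued functions with weak average
`β`-hslope at most `L`. -/
def weakHolderClass {Ω : Type*} [MetricSpace Ω] [MeasurableSpace Ω] (μ : Measure Ω)
    (β L : ℝ) : Set (Ω → ℝ) :=
  {f | Measurable f ∧ (∀ x, f x ∈ Icc (0:ℝ) 1) ∧ weakAvgSlope μ β f ≤ ENNReal.ofReal L}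

/-- The covering number `N_Ω(t)`: minimal cardinality of a set of points whose closed
`t`-balls cover `Ω` (`∞` if no finite cover exists). -/
def coveringNumber (Ω : Type*) [MetricSpace Ω] (t : ℝ) : ℝ≥0∞ :=
  ⨅ (A : Finset Ω) (_ : ∀ x : Ω, ∃ a ∈ A, dist x a ≤ t), (A.card : ℝ≥0∞)

/-- `B` is a finite set of `ε`-brackets (with respect to `L1(μ)`) covering `F`. -/
def IsBracketing {Ω : Type*} [MeasurableSpace Ω] (μ : Measure Ω) (F : Set (Ω → ℝ))
    (ε : ℝ) (B : Finset ((Ω → ℝ) × (Ω → ℝ))) : Prop :=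
  (∀ lu ∈ B, (∀ x, lu.1 x ∈ Icc (0:ℝ) 1 ∧ lu.2 x ∈ Icc (0:ℝ) 1) ∧
      ∫⁻ x, ENNReal.ofReal |lu.2 x - lu.1 x| ∂μ ≤ ENNReal.ofReal ε) ∧
    ∀ f ∈ F, ∃ lu ∈ B, ∀ x, lu.1 x ≤ f x ∧ f x ≤ lu.2 x

/-- The bracketing number `N_[](F, L1(μ), ε)`. -/
def bracketingNumber {Ω : Type*} [MetricSpace Ω] [MeasurableSpace Ω] (F : Set (Ω → ℝ))
    (μ : Measure Ω) (ε : ℝ) : ℝ≥0∞ :=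
  ⨅ (B : Finset ((Ω → ℝ) × (Ω → ℝ))) (_ : IsBracketing μ F ε B), (B.card : ℝ≥0∞)

/-- Logarithm of an extended-real cardinality: equals `log N` for finite natural `N`
and `∞` when `N = ∞`. -/
def elog (N : ℝ≥0∞) : ℝ≥0∞ :=
  ⨅ (m : ℕ) (_ : N ≤ (m : ℝ≥0∞)), ENNReal.ofReal (Real.log m)

/-- The `L1` risk `L_D(f) = E_{(X,Y)∼D} |f(X) − Y|`. -/
def risk {Ω : Type*} [MetricSpace Ω] [MeasurableSpace Ω] (D : Measure (Ω × ℝ))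
    (f : Ω → ℝ) : ℝ≥0∞ :=
  ∫⁻ p, ENNReal.ofReal |f p.1 - p.2| ∂D

/-- The empirical `L1` risk `L_S(f) = (1/n) Σ_i |f(X_i) − Y_i|`. -/
def empRisk {Ω : Type*} [MetricSpace Ω] {n : ℕ} (S : Fin n → Ω × ℝ) (f : Ω → ℝ) : ℝ :=
  (n : ℝ)⁻¹ * ∑ i, |f (S i).1 - (S i).2|

/-- `D` is realizable by the class `F`. -/
def Realizable {Ω : Type*} [MetricSpace Ω] [MeasurableSpace Ω] (D : Measure (Ω × ℝ))
    (F : Set (Ω → ℝ)) : Prop :=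
  ∃ f ∈ F, risk D f = 0

/-- The empirical average `β`-hslope of `f` over the sample points `X_1,…,X_n`. -/
def empAvgSlope {Ω : Type*} [MetricSpace Ω] (β : ℝ) {n : ℕ} (X : Fin n → Ω)
    (f : Ω → ℝ) : ℝ :=
  (n : ℝ)⁻¹ * ∑ i, ⨆ (j : Fin n) (_ : X j ≠ X i), |f (X i) - f (X j)| / dist (X i) (X j) ^ β


namespace WAux

lemma lint_shift' (g : ℝ → ℝ≥0∞) (c : ℝ) (S : Set ℝ) :
    ∫⁻ z in (fun z : ℝ => z - c) ⁻¹' S, g (z - c) = ∫⁻ u in S, g u :=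
  (measurePreserving_sub_right volume c).setLIntegral_comp_preimage_emb
    (MeasurableEquiv.subRight c).measurableEmbedding g S

lemma lint_shift_Ioc (g : ℝ → ℝ≥0∞) (c a b : ℝ) :
    ∫⁻ z in Set.Ioc a b, g (z - c) = ∫⁻ u in Set.Ioc (a - c) (b - c), g u := by
  have hpre : (fun z : ℝ => z - c) ⁻¹' Set.Ioc (a - c) (b - c) = Set.Ioc a b := by
    ext z; simp [Set.mem_Ioc]
  rw [← hpre, lint_shift']

lemma lint_reflect (g : ℝ → ℝ≥0∞) (r : ℝ) :
    ∫⁻ z in Set.Ico (-r) 0, g z = ∫⁻ u in Set.Ioc 0 r, g (-u) := by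
  have hpre : (fun z : ℝ => -z) ⁻¹' Set.Ico (-r) 0 = Set.Ioc 0 r := by
    ext z; simp [Set.mem_Ico, Set.mem_Ioc]
  have := (Measure.measurePreserving_neg volume).setLIntegral_comp_preimage_emb
    (MeasurableEquiv.neg ℝ).measurableEmbedding g (Set.Ico (-r) 0)
  rw [hpre] at this
  exact this.symm

lemma core_int {β : ℝ} (hβ0 : 0 < β) {δ : ℝ} (hδ : 0 < δ) :
    ∫⁻ u in Set.Ioc (0:ℝ) δ, ENNReal.ofReal (u ^ (β - 1)) = ENNReal.ofReal (δ ^ β / β) := by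
  have hint : IntegrableOn (fun u : ℝ => u ^ (β - 1)) (Set.Ioc 0 δ) := by
    have := intervalIntegral.intervalIntegrable_rpow' (r := β - 1) (by linarith) (a := 0) (b := δ)
    rwa [intervalIntegrable_iff_integrableOn_Ioc_of_le hδ.le] at this
  have hnn : 0 ≤ᵐ[volume.restrict (Set.Ioc (0:ℝ) δ)] fun u : ℝ => u ^ (β - 1) :=
    (ae_restrict_iff' measurableSet_Ioc).2 (ae_of_all _ fun u hu => Real.rpow_nonneg hu.1.le _)
  rw [← ofReal_integral_eq_lintegral_ofReal hint hnn]
  congr 1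
  rw [← intervalIntegral.integral_of_le hδ.le, integral_rpow (Or.inl (by linarith))]
  rw [sub_add_cancel, Real.zero_rpow (by positivity), sub_zero]

lemma core_top : ∫⁻ u in Set.Ioc (0:ℝ) (1/2), ENNReal.ofReal (u ^ (-1:ℝ)) = ⊤ := by
  have hsub : ∫⁻ u in Set.Ioo (0:ℝ) (1/2), ENNReal.ofReal (u ^ (-1:ℝ)) ≤
      ∫⁻ u in Set.Ioc (0:ℝ) (1/2), ENNReal.ofReal (u ^ (-1:ℝ)) :=
    lintegral_mono' (Measure.restrict_mono Set.Ioo_subset_Ioc_self le_rfl) le_rfl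
  refine top_le_iff.mp (le_trans ?_ hsub)
  by_contra h
  push_neg at h
  have hmeas : Measurable fun u : ℝ => u ^ (-1:ℝ) := measurable_id.pow_const _
  have hnn : 0 ≤ᵐ[volume.restrict (Set.Ioo (0:ℝ) (1/2))] fun u : ℝ => u ^ (-1:ℝ) :=
    (ae_restrict_iff' measurableSet_Ioo).2 (ae_of_all _ fun u hu => Real.rpow_nonneg hu.1.le _)
  have hint : IntegrableOn (fun u : ℝ => u ^ (-1:ℝ)) (Set.Ioo 0 (1/2)) :=
    ⟨hmeas.aestronglyMeasurable, (hasFiniteIntegral_iff_ofReal hnn).2 h⟩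
  have := (intervalIntegral.integrableOn_Ioo_rpow_iff (by norm_num : (0:ℝ) < 1/2)).1 hint
  linarith

lemma sym_int {β : ℝ} (hβ0 : 0 < β) {r : ℝ} (hr : 0 < r) :
    ∫⁻ z in Set.Icc (1/2 - r) (1/2 + r), ENNReal.ofReal (|z - 1/2| ^ (β - 1)) =
      ENNReal.ofReal (2 * (r ^ β / β)) := by
  have hpre : (fun z : ℝ => z - 1/2) ⁻¹' Set.Icc (-r) r = Set.Icc (1/2 - r) (1/2 + r) := by
    ext z; simp [Set.mem_Icc]; constructor <;> rintro ⟨h1, h2⟩ <;> exact ⟨by linarith, by linarith⟩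
  have h1 := lint_shift' (fun u => ENNReal.ofReal (|u| ^ (β - 1))) (1/2) (Set.Icc (-r) r)
  rw [hpre] at h1
  rw [h1]
  have hsplit : Set.Icc (-r) r = Set.Ico (-r) 0 ∪ Set.Icc 0 r :=
    (Set.Ico_union_Icc_eq_Icc (by linarith) hr.le).symm
  rw [hsplit, lintegral_union measurableSet_Icc
    (by rw [Set.disjoint_left]; rintro u ⟨_, h2⟩ ⟨h3, _⟩; linarith)]
  have hcore : ∫⁻ u in Set.Ioc (0:ℝ) r, ENNReal.ofReal (|u| ^ (β - 1)) =
      ENNReal.ofReal (r ^ β / β) := by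
    rw [setLIntegral_congr_fun measurableSet_Ioc
      (fun u (hu : u ∈ Set.Ioc (0:ℝ) r) => by rw [abs_of_pos hu.1])]
    exact core_int hβ0 hr
  have hp1 : ∫⁻ u in Set.Ico (-r) (0:ℝ), ENNReal.ofReal (|u| ^ (β - 1)) =
      ENNReal.ofReal (r ^ β / β) := by
    rw [lint_reflect]
    simpa [abs_neg] using hcore
  have hp2 : ∫⁻ u in Set.Icc (0:ℝ) r, ENNReal.ofReal (|u| ^ (β - 1)) =
      ENNReal.ofReal (r ^ β / β) := by
    rw [Measure.restrict_congr_set Ioc_ae_eq_Icc.symm]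
    exact hcore
  rw [hp1, hp2, ← ENNReal.ofReal_add (by positivity) (by positivity)]
  ring_nf

lemma measEmb : MeasurableEmbedding ((↑) : (Set.Icc (0:ℝ) 1) → ℝ) :=
  MeasurableEmbedding.subtype_coe measurableSet_Icc

lemma lint_sub (G : ℝ → ℝ≥0∞) :
    ∫⁻ x : (Set.Icc (0:ℝ) 1), G ↑x ∂((volume : Measure ℝ).comap Subtype.val) =
      ∫⁻ z in Set.Icc (0:ℝ) 1, G z := by
  have h := measEmb.lintegral_map (μ := (volume : Measure ℝ).comap Subtype.val) (f := G)
  rw [MeasurableEmbedding.map_comap measEmb, Subtype.range_coe] at h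
  exact h.symm

lemma nu_set {β : ℝ} (S' : Set ℝ) (hS' : MeasurableSet S') :
    ((volume : Measure ℝ).comap Subtype.val).withDensity
      (fun z : Set.Icc (0:ℝ) 1 => ENNReal.ofReal (|(z:ℝ) - 1/2| ^ (β - 1)))
      (Subtype.val ⁻¹' S') =
    ∫⁻ z in S' ∩ Set.Icc (0:ℝ) 1, ENNReal.ofReal (|z - 1/2| ^ (β - 1)) := by
  rw [withDensity_apply _ (measurable_subtype_coe hS'),
    ← lintegral_indicator (measurable_subtype_coe hS')]
  have heq : ∀ x : Set.Icc (0:ℝ) 1,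
      (Subtype.val ⁻¹' S').indicator
        (fun z : Set.Icc (0:ℝ) 1 => ENNReal.ofReal (|(z:ℝ) - 1/2| ^ (β - 1))) x =
      (S'.indicator fun z : ℝ => ENNReal.ofReal (|z - 1/2| ^ (β - 1))) ↑x := fun x =>
    Set.indicator_comp_right (s := S') Subtype.val
      (g := fun z : ℝ => ENNReal.ofReal (|z - 1/2| ^ (β - 1))) (x := x)
  rw [lintegral_congr heq, lint_sub, lintegral_indicator hS',
    Measure.restrict_restrict hS']

lemma nu_Ioc {β : ℝ} (hβ0 : 0 < β) {δ : ℝ} (hδ0 : 0 < δ) (hδ : δ ≤ 1/2) :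
    ((volume : Measure ℝ).comap Subtype.val).withDensity
      (fun z : Set.Icc (0:ℝ) 1 => ENNReal.ofReal (|(z:ℝ) - 1/2| ^ (β - 1)))
      (Subtype.val ⁻¹' Set.Ioc (1/2 : ℝ) (1/2 + δ)) = ENNReal.ofReal (δ ^ β / β) := by
  rw [nu_set _ measurableSet_Ioc]
  have hinter : Set.Ioc (1/2:ℝ) (1/2 + δ) ∩ Set.Icc 0 1 = Set.Ioc (1/2:ℝ) (1/2 + δ) := by
    rw [Set.inter_eq_left]; rintro z ⟨h1, h2⟩; exact ⟨by linarith, by linarith⟩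
  rw [hinter, setLIntegral_congr_fun measurableSet_Ioc (
    fun z (hz : z ∈ Set.Ioc (1/2:ℝ) (1/2 + δ)) => by
      rw [abs_of_pos (by linarith [hz.1] : (0:ℝ) < z - 1/2)])]
  have hs := lint_shift_Ioc (fun u => ENNReal.ofReal (u ^ (β - 1))) (1/2) (1/2) (1/2 + δ)
  have he : Set.Ioc (1/2 - 1/2 : ℝ) (1/2 + δ - 1/2) = Set.Ioc 0 δ := by norm_num
  rw [he] at hs
  rw [hs]
  exact core_int hβ0 hδ0

lemma hslope_upper {β : ℝ} (hβ0 : 0 < β)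
    (f : (Set.Icc (0:ℝ) 1) → ℝ)
    (hfdef : ∀ z, f z = if 1 / 2 < (z : ℝ) then 1 else 0)
    (x : Set.Icc (0:ℝ) 1) (hx : (x : ℝ) ≠ 1/2) :
    hslope β f x ≤ ENNReal.ofReal (|(x:ℝ) - 1/2| ^ (-β)) := by
  refine iSup₂_le fun y hy => ?_
  by_cases hfe : f x = f y
  · simp [hfe, Real.rpow_nonneg]
  · have hd0 : 0 < |(x:ℝ) - 1/2| := abs_pos.2 (sub_ne_zero.2 hx)
    have hkey : |f x - f y| = 1 ∧ |(x:ℝ) - 1/2| ≤ dist x y := by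
      rw [Subtype.dist_eq, Real.dist_eq]
      rcases lt_or_ge (1/2 : ℝ) (x:ℝ) with ha | ha <;> rcases lt_or_ge (1/2 : ℝ) (y:ℝ) with hb | hb
      · exact absurd (by rw [hfdef x, hfdef y, if_pos ha, if_pos hb]) hfe
      · refine ⟨by rw [hfdef x, hfdef y, if_pos ha, if_neg (not_lt.2 hb)]; norm_num, ?_⟩
        rw [abs_of_pos (by linarith : (0:ℝ) < (x:ℝ) - 1/2),
          abs_of_pos (by linarith : (0:ℝ) < (x:ℝ) - (y:ℝ))]
        linarith
      · refine ⟨by rw [hfdef x, hfdef y, if_neg (not_lt.2 ha), if_pos hb]; norm_num, ?_⟩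
        rw [abs_of_nonpos (by linarith : (x:ℝ) - 1/2 ≤ 0),
          abs_of_neg (by linarith : (x:ℝ) - (y:ℝ) < 0)]
        linarith
      · exact absurd (by rw [hfdef x, hfdef y, if_neg (not_lt.2 ha), if_neg (not_lt.2 hb)]) hfe
    obtain ⟨h1, hdle⟩ := hkey
    have hrle : |(x:ℝ) - 1/2| ^ β ≤ dist x y ^ β := Real.rpow_le_rpow hd0.le hdle hβ0.le
    have hrpos : 0 < |(x:ℝ) - 1/2| ^ β := Real.rpow_pos_of_pos hd0 β
    apply ENNReal.ofReal_le_ofReal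
    rw [h1, Real.rpow_neg hd0.le, ← one_div]
    exact one_div_le_one_div_of_le hrpos hrle

lemma hslope_lower (γ : ℝ)
    (f : (Set.Icc (0:ℝ) 1) → ℝ)
    (hfdef : ∀ z, f z = if 1 / 2 < (z : ℝ) then 1 else 0)
    (x : Set.Icc (0:ℝ) 1) (hx : 1/2 < (x : ℝ)) :
    ENNReal.ofReal (((x:ℝ) - 1/2) ^ (-γ)) ≤ hslope γ f x := by
  have hhalf : (1/2 : ℝ) ∈ Set.Icc (0:ℝ) 1 := by norm_num
  set y : Set.Icc (0:ℝ) 1 := ⟨1/2, hhalf⟩ with hy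
  have hne : y ≠ x := by
    intro h; rw [← h] at hx; simp [hy] at hx
  have hval : ENNReal.ofReal (|f x - f y| / dist x y ^ γ) =
      ENNReal.ofReal (((x:ℝ) - 1/2) ^ (-γ)) := by
    have hyv : ((y:ℝ)) = 1/2 := rfl
    have hfx : f x = 1 := by rw [hfdef, if_pos hx]
    have hfy : f y = 0 := by rw [hfdef, hyv]; norm_num
    have hdist : dist x y = (x:ℝ) - 1/2 := by
      rw [Subtype.dist_eq, Real.dist_eq, hyv, abs_of_pos (by linarith)]
    rw [hfx, hfy, hdist, Real.rpow_neg (by linarith)]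
    norm_num
  calc ENNReal.ofReal (((x:ℝ) - 1/2) ^ (-γ)) =
      ENNReal.ofReal (|f x - f y| / dist x y ^ γ) := hval.symm
    _ ≤ hslope γ f x := le_iSup₂ (f := fun (y : Set.Icc (0:ℝ) 1) (_ : y ≠ x) =>
        ENNReal.ofReal (|f x - f y| / dist x y ^ γ)) y hne

end WAux

/-- Claim: a function that is weakly-average-β-Hölder but neither
strongly-average-β-Hölder nor weakly-average-Lipschitz. -/
theorem weak_avg_holder_not_avg_holder_not_weak_lip
    (β : ℝ) (hβ0 : 0 < β) (hβ1 : β < 1)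
    (f : (Set.Icc (0:ℝ) 1) → ℝ)
    (hfdef : ∀ z, f z = if 1 / 2 < (z : ℝ) then 1 else 0)
    (ν : Measure (Set.Icc (0:ℝ) 1))
    (hν : ν = ((volume : Measure ℝ).comap Subtype.val).withDensity
      fun z => ENNReal.ofReal (|(z : ℝ) - 1 / 2| ^ (β - 1)))
    (μ : Measure (Set.Icc (0:ℝ) 1)) (hμ : μ = (ν Set.univ)⁻¹ • ν) :
    IsProbabilityMeasure μ ∧
    weakAvgSlope μ β f ≠ ⊤ ∧
    avgSlope μ β f = ⊤ ∧
    weakAvgSlope μ 1 f = ⊤ := by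
  subst hν hμ
  have hβ1' : (0:ℝ) < 1 - β := by linarith
  set m : Measure (Set.Icc (0:ℝ) 1) := (volume : Measure ℝ).comap Subtype.val with hm
  set ν : Measure (Set.Icc (0:ℝ) 1) :=
    m.withDensity (fun z => ENNReal.ofReal (|(z:ℝ) - 1 / 2| ^ (β - 1))) with hnu
  -- total mass facts
  have hν_univ_eq : ν Set.univ =
      ∫⁻ z in Set.Icc (0:ℝ) 1, ENNReal.ofReal (|z - 1/2| ^ (β - 1)) := by
    rw [hnu, hm, withDensity_apply _ MeasurableSet.univ, Measure.restrict_univ]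
    exact WAux.lint_sub (fun z => ENNReal.ofReal (|z - 1/2| ^ (β - 1)))
  have hν_univ_le : ν Set.univ ≤ ENNReal.ofReal (2 * ((1:ℝ) ^ β / β)) := by
    rw [hν_univ_eq, ← WAux.sym_int hβ0 one_pos]
    exact lintegral_mono' (Measure.restrict_mono
      (Set.Icc_subset_Icc (by norm_num) (by norm_num)) le_rfl) le_rfl
  have hν_top : ν Set.univ ≠ ⊤ :=
    fun h => ENNReal.ofReal_ne_top (top_le_iff.1 (h ▸ hν_univ_le))
  have hν_half : ν (Subtype.val ⁻¹' Set.Ioc (1/2 : ℝ) (1/2 + 1/2)) =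
      ENNReal.ofReal ((1/2:ℝ) ^ β / β) :=
    WAux.nu_Ioc hβ0 (by norm_num) le_rfl
  have hν_pos : ν Set.univ ≠ 0 := by
    intro h0
    have hsub : ν (Subtype.val ⁻¹' Set.Ioc (1/2 : ℝ) (1/2 + 1/2)) ≤ ν Set.univ :=
      measure_mono (Set.subset_univ _)
    rw [h0, hν_half, nonpos_iff_eq_zero] at hsub
    exact absurd hsub (ne_of_gt (ENNReal.ofReal_pos.2 (by positivity)))
  have hprob : IsProbabilityMeasure ((ν Set.univ)⁻¹ • ν) :=
    ⟨by rw [Measure.smul_apply, smul_eq_mul, ENNReal.inv_mul_cancel hν_pos hν_top]⟩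
  refine ⟨hprob, ?_, ?_, ?_⟩
  -- (i) weak average β-slope is finite
  · have hbound : weakAvgSlope ((ν Set.univ)⁻¹ • ν) β f ≤
        (ν Set.univ)⁻¹ * ENNReal.ofReal (2 * ((1:ℝ)/β)) := by
      refine iSup₂_le fun t ht => ?_
      set r : ℝ := t ^ (-β⁻¹) with hr
      have hrpos : 0 < r := Real.rpow_pos_of_pos ht _
      have hsubset : {x : Set.Icc (0:ℝ) 1 | ENNReal.ofReal t ≤ hslope β f x} ⊆
          Subtype.val ⁻¹' Set.Icc (1/2 - r) (1/2 + r) := by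
        intro x hx
        simp only [Set.mem_setOf_eq] at hx
        by_cases hhalf : (x:ℝ) = 1/2
        · exact ⟨by rw [hhalf]; linarith, by rw [hhalf]; linarith⟩
        · have hle := le_trans hx (WAux.hslope_upper hβ0 f hfdef x hhalf)
          have ht' : t ≤ |(x:ℝ) - 1/2| ^ (-β) :=
            (ENNReal.ofReal_le_ofReal_iff (Real.rpow_nonneg (abs_nonneg _) _)).1 hle
          have hu : |(x:ℝ) - 1/2| ≤ r := by
            have h2 := Real.rpow_le_rpow_of_nonpos ht ht'
              (neg_nonpos.2 (inv_nonneg.2 hβ0.le))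
            rwa [← Real.rpow_mul (abs_nonneg _), neg_mul_neg,
              mul_inv_cancel₀ hβ0.ne', Real.rpow_one] at h2
          obtain ⟨hu1, hu2⟩ := abs_le.1 hu
          exact ⟨by linarith, by linarith⟩
      have hνIcc : ν (Subtype.val ⁻¹' Set.Icc (1/2 - r) (1/2 + r)) ≤
          ENNReal.ofReal (2 * (r ^ β / β)) := by
        rw [hnu, WAux.nu_set _ measurableSet_Icc, ← WAux.sym_int hβ0 hrpos]
        exact lintegral_mono' (Measure.restrict_mono Set.inter_subset_left le_rfl) le_rfl
      have hrβ : r ^ β = t⁻¹ := by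
        rw [hr, ← Real.rpow_mul ht.le, neg_mul, inv_mul_cancel₀ hβ0.ne', Real.rpow_neg_one]
      have hmain : ENNReal.ofReal t * ((ν Set.univ)⁻¹ • ν)
            {x | ENNReal.ofReal t ≤ hslope β f x} ≤
          (ν Set.univ)⁻¹ * (ENNReal.ofReal t * ENNReal.ofReal (2 * (r ^ β / β))) := by
        rw [Measure.smul_apply, smul_eq_mul, mul_left_comm]
        exact mul_le_mul_right (mul_le_mul_right
          (le_trans (measure_mono hsubset) hνIcc) _) _
      refine le_trans hmain ?_
      refine mul_le_mul_right ?_ _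
      rw [← ENNReal.ofReal_mul ht.le]
      apply ENNReal.ofReal_le_ofReal
      rw [hrβ]
      have hteq : t * (2 * (t⁻¹ / β)) = 2 * (1/β) := by
        field_simp
      rw [hteq]
    exact fun h => (ENNReal.mul_ne_top (ENNReal.inv_ne_top.2 hν_pos)
      ENNReal.ofReal_ne_top) (top_le_iff.1 (h ▸ hbound))
  -- (ii) average β-slope is infinite
  · rw [avgSlope, lintegral_smul_measure]
    have hdens_meas : Measurable
        (fun z : Set.Icc (0:ℝ) 1 => ENNReal.ofReal (|(z:ℝ) - 1 / 2| ^ (β - 1))) :=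
      (((measurable_subtype_coe.sub measurable_const).abs).pow_const _).ennreal_ofReal
    have hwd := lintegral_withDensity_eq_lintegral_mul_non_measurable m hdens_meas
      (ae_of_all _ fun x => ENNReal.ofReal_lt_top) (fun x => hslope β f x)
    have hint_top : ∫⁻ x, hslope β f x ∂ν = ⊤ := by
      rw [hnu, hwd]
      set G : ℝ → ℝ≥0∞ := fun z => ENNReal.ofReal (|z - 1/2| ^ (β - 1)) *
        (if 1/2 < z then ENNReal.ofReal ((z - 1/2) ^ (-β)) else 0) with hG
      have hge : ∀ x : Set.Icc (0:ℝ) 1,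
          G ↑x ≤ (fun z : Set.Icc (0:ℝ) 1 =>
            ENNReal.ofReal (|(z:ℝ) - 1 / 2| ^ (β - 1)) * hslope β f z) x := fun x => by
        simp only [hG]
        split_ifs with h
        · exact mul_le_mul_right (WAux.hslope_lower β f hfdef x h) _
        · simp
      apply top_unique
      calc (⊤ : ℝ≥0∞) = ∫⁻ u in Set.Ioc (0:ℝ) (1/2), ENNReal.ofReal (u ^ (-1:ℝ)) :=
            WAux.core_top.symm
        _ = ∫⁻ z in Set.Ioc (1/2:ℝ) 1, ENNReal.ofReal ((z - 1/2) ^ (-1:ℝ)) := by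
            have hs := WAux.lint_shift_Ioc
              (fun u => ENNReal.ofReal (u ^ (-1:ℝ))) (1/2) (1/2) 1
            have he : Set.Ioc (1/2 - 1/2 : ℝ) (1 - 1/2) = Set.Ioc 0 (1/2) := by norm_num
            rw [he] at hs
            exact hs.symm
        _ = ∫⁻ z in Set.Ioc (1/2:ℝ) 1, G z := by
            refine setLIntegral_congr_fun measurableSet_Ioc (
              fun z (hz : z ∈ Set.Ioc (1/2:ℝ) 1) => ?_)
            have hz0 : (0:ℝ) < z - 1/2 := by linarith [hz.1]
            simp only [hG]
            rw [if_pos hz.1, abs_of_pos hz0,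
              ← ENNReal.ofReal_mul (Real.rpow_nonneg hz0.le _),
              ← Real.rpow_add hz0]
            have : β - 1 + -β = (-1:ℝ) := by ring
            rw [this]
        _ ≤ ∫⁻ z in Set.Icc (0:ℝ) 1, G z :=
            lintegral_mono' (Measure.restrict_mono
              (Set.Ioc_subset_Icc_self.trans (Set.Icc_subset_Icc (by norm_num) le_rfl))
              le_rfl) le_rfl
        _ = ∫⁻ x : Set.Icc (0:ℝ) 1, G ↑x ∂m := (WAux.lint_sub G).symm
        _ ≤ _ := lintegral_mono hge
    rw [hint_top, smul_eq_mul, ENNReal.mul_top (ENNReal.inv_ne_zero.2 hν_top)]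
  -- (iii) weak average Lipschitz slope is infinite
  · apply ENNReal.eq_top_of_forall_nnreal_le
    intro M
    set K : ℝ := 2 * ((1:ℝ) ^ β / β) with hK
    have hK0 : 0 < K := by rw [hK]; positivity
    have hcK : (ENNReal.ofReal K)⁻¹ ≤ (ν Set.univ)⁻¹ :=
      ENNReal.inv_le_inv' hν_univ_le
    set P : ℝ := max (β * ((M:ℝ) * K)) 1 with hP
    have hP0 : 0 < P := lt_of_lt_of_le one_pos (le_max_right _ _)
    set t : ℝ := max 2 (P ^ (1 - β)⁻¹) with htdef
    have ht2 : (2:ℝ) ≤ t := le_max_left _ _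
    have ht0 : (0:ℝ) < t := by linarith
    set δ : ℝ := t⁻¹ with hδdef
    have hδ0 : 0 < δ := inv_pos.2 ht0
    have hδhalf : δ ≤ 1/2 := by
      rw [hδdef]
      rw [show (1/2 : ℝ) = 2⁻¹ by norm_num]
      exact inv_anti₀ two_pos ht2
    have hsubset : Subtype.val ⁻¹' Set.Ioc (1/2 : ℝ) (1/2 + δ) ⊆
        {x : Set.Icc (0:ℝ) 1 | ENNReal.ofReal t ≤ hslope 1 f x} := by
      intro x hx
      obtain ⟨hx1, hx2⟩ := hx
      refine le_trans ?_ (WAux.hslope_lower 1 f hfdef x hx1)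
      apply ENNReal.ofReal_le_ofReal
      rw [Real.rpow_neg_one]
      calc t = δ⁻¹ := by rw [hδdef, inv_inv]
        _ ≤ ((x:ℝ) - 1/2)⁻¹ := by
            apply inv_anti₀ (by linarith) (by linarith)
    have hνIoc : ν (Subtype.val ⁻¹' Set.Ioc (1/2 : ℝ) (1/2 + δ)) =
        ENNReal.ofReal (δ ^ β / β) := WAux.nu_Ioc hβ0 hδ0 hδhalf
    -- t^(1-β) ≥ P
    have htP : P ≤ t ^ (1 - β) := by
      have h1 : P ^ (1 - β)⁻¹ ≤ t := le_max_right _ _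
      have h2 := Real.rpow_le_rpow (Real.rpow_pos_of_pos hP0 _).le h1 (by linarith : (0:ℝ) ≤ 1 - β)
      rwa [← Real.rpow_mul hP0.le, inv_mul_cancel₀ (by linarith : (1:ℝ) - β ≠ 0),
        Real.rpow_one] at h2
    have hδβ : δ ^ β = t ^ (-β) := by
      rw [hδdef, Real.inv_rpow ht0.le, ← Real.rpow_neg ht0.le]
    have hmul : t ^ (1 - β) = t * t ^ (-β) := by
      rw [show (1 - β : ℝ) = 1 + (-β) by ring, Real.rpow_add ht0, Real.rpow_one]
    have htδ : t * (δ ^ β / β) = t ^ (1 - β) / β := by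
      rw [hδβ, hmul]; ring
    have hMle : (M:ℝ) * K ≤ t * (δ ^ β / β) := by
      rw [htδ]
      have h3 : β * ((M:ℝ) * K) ≤ t ^ (1 - β) := le_trans (le_max_left _ _) htP
      calc (M:ℝ) * K = β * ((M:ℝ) * K) / β := by field_simp
        _ ≤ t ^ (1 - β) / β := (div_le_div_iff_of_pos_right hβ0).2 h3
    -- main chain
    have hchain : (M : ℝ≥0∞) ≤ ENNReal.ofReal t *
        (((ν Set.univ)⁻¹ • ν) {x | ENNReal.ofReal t ≤ hslope 1 f x}) := by
      calc (M : ℝ≥0∞) = ENNReal.ofReal (M:ℝ) := ENNReal.ofReal_coe_nnreal.symm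
        _ = ENNReal.ofReal ((M:ℝ) * K) * (ENNReal.ofReal K)⁻¹ := by
            rw [ENNReal.ofReal_mul (by positivity), mul_assoc,
              ENNReal.mul_inv_cancel (ne_of_gt (ENNReal.ofReal_pos.2 hK0))
                ENNReal.ofReal_ne_top, mul_one]
        _ ≤ ENNReal.ofReal (t * (δ ^ β / β)) * (ν Set.univ)⁻¹ :=
            mul_le_mul' (ENNReal.ofReal_le_ofReal hMle) hcK
        _ = ENNReal.ofReal t * ((ν Set.univ)⁻¹ * ENNReal.ofReal (δ ^ β / β)) := by
            rw [ENNReal.ofReal_mul ht0.le]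
            ring
        _ = ENNReal.ofReal t * ((ν Set.univ)⁻¹ *
              ν (Subtype.val ⁻¹' Set.Ioc (1/2 : ℝ) (1/2 + δ))) := by rw [hνIoc]
        _ ≤ _ := by
            refine mul_le_mul_right ?_ _
            rw [Measure.smul_apply, smul_eq_mul]
            exact mul_le_mul_right (measure_mono hsubset) _
    exact le_trans hchain (le_iSup₂ (f := fun (t : ℝ) (_ : 0 < t) => ENNReal.ofReal t *
      (((ν Set.univ)⁻¹ • ν) {x | ENNReal.ofReal t ≤ hslope 1 f x})) t ht0)

end
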